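/- (Corollary 2, discriminator part.) Let E : 𝒳 → ℱ be an extractor satisfying H(Y|E(X)) = H(Y|X) and H(Z|(E(X),π_E(X))) = H(Z|π_E(X)), and let Φ(x) = (E(x), π_E(x)). Then the optimal discriminator's output equals the posterior of Z given the true label posterior: for every x ∈ 𝒳 and z ∈ 𝒵, Pr[Φ=Φ(x), Z=z] / Pr[Φ=Φ(x)] = Pr[π=π(x), Z=z] / Pr[π=π(x)], where π : 𝒳 → (𝒴 → ℝ) is the posterior map π(x)(y) = q_{XY}(x,y)/q_X(x). -/

import Mathlib

open scoped BigOperators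

/-- Marginal of a joint pmf on the first coordinate: `q_X(x) = ∑ w q(x,w)`. -/
noncomputable def margX {X W : Type*} [Fintype W] (q : X × W → ℝ) (x : X) : ℝ :=
  ∑ w, q (x, w)

open Classical in
/-- `Pr[f = a, W = w] = ∑_{x : f x = a} q(x,w)`. -/
noncomputable def jointPr {X W A : Type*} [Fintype X] (q : X × W → ℝ)
    (f : X → A) (a : A) (w : W) : ℝ :=
  ∑ x ∈ Finset.univ.filter (fun x => f x = a), q (x, w)

open Classical in
/-- `Pr[f = a] = ∑_{x : f x = a} q_X(x)`. -/
noncomputable def featPr {X W A : Type*} [Fintype X] [Fintype W] (q : X × W → ℝ)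
    (f : X → A) (a : A) : ℝ :=
  ∑ x ∈ Finset.univ.filter (fun x => f x = a), margX q x

open Classical in
/-- Conditional entropy `H(W | f(X))`, natural logarithm, with the convention that
summands with `Pr[f=a, W=w] = 0` contribute `0` (automatic since `-0 * log _ = 0`). -/
noncomputable def condEnt {X W A : Type*} [Fintype X] [Fintype W] (q : X × W → ℝ)
    (f : X → A) : ℝ :=
  ∑ a ∈ Finset.univ.image f, ∑ w,
    -(jointPr q f a w) * Real.log (jointPr q f a w / featPr q f a)

/-- `-log t` valued in `(-∞, ∞]`, with the convention `-log 0 = +∞`. -/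
noncomputable def negLog (t : ℝ) : EReal := if t = 0 then ⊤ else ((-(Real.log t) : ℝ) : EReal)

/-- Cross-entropy loss `∑_{x,w} q(x,w) · (-log P(Φ(x))(w))`, valued in `(-∞, ∞]`. -/
noncomputable def condLoss {X W G : Type*} [Fintype X] [Fintype W] (q : X × W → ℝ)
    (Φ : X → G) (P : G → W → ℝ) : EReal :=
  ∑ x, ∑ w, (q (x, w) : EReal) * negLog (P (Φ x) w)

/-- A conditional probability mass function on labels `W` with feature space `G`. -/
def IsCondPMF {G W : Type*} [Fintype W] (P : G → W → ℝ) : Prop :=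
  (∀ g w, 0 ≤ P g w) ∧ ∀ g, ∑ w, P g w = 1

open Classical in
/-- The posterior predictor: `Pr[Φ=g, W=w]/Pr[Φ=g]` on features of positive probability
in the image of `Φ`, and the uniform distribution on `W` otherwise. -/
noncomputable def posteriorPred {X W G : Type*} [Fintype X] [Fintype W] (q : X × W → ℝ)
    (Φ : X → G) (g : G) (w : W) : ℝ :=
  if g ∈ Set.range Φ ∧ 0 < featPr q Φ g then jointPr q Φ g w / featPr q Φ g
  else 1 / Fintype.card W

/-- The posterior map `π(x)(w) = q(x,w)/q_X(x)`. -/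
noncomputable def postMap {X W : Type*} [Fintype W] (q : X × W → ℝ) (x : X) : W → ℝ :=
  fun w => q (x, w) / margX q x

/-- Two-variable marginal `q_{XY}` of a pmf on `X × Y × Z × V`. -/
noncomputable def qXY {X Y Z V : Type*} [Fintype Z] [Fintype V]
    (q : X × Y × Z × V → ℝ) : X × Y → ℝ :=
  fun p => ∑ z, ∑ v, q (p.1, p.2, z, v)

/-- Two-variable marginal `q_{XZ}` of a pmf on `X × Y × Z × V`. -/
noncomputable def qXZ {X Y Z V : Type*} [Fintype Y] [Fintype V]
    (q : X × Y × Z × V → ℝ) : X × Z → ℝ :=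
  fun p => ∑ y, ∑ v, q (p.1, y, p.2, v)

/-- Two-variable marginal `q_{XV}` of a pmf on `X × Y × Z × V`. -/
noncomputable def qXV {X Y Z V : Type*} [Fintype Y] [Fintype Z]
    (q : X × Y × Z × V → ℝ) : X × V → ℝ :=
  fun p => ∑ y, ∑ z, q (p.1, y, z, p.2)

/-- The posterior feature of an extractor `E`:
`π_E(x)(y) = Pr[E = E(x), Y = y] / Pr[E = E(x)]`. -/
noncomputable def postFeat {X Y F : Type*} [Fintype X] [Fintype Y] (qxy : X × Y → ℝ)
    (E : X → F) (x : X) : Y → ℝ :=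
  fun y => jointPr qxy E (E x) y / featPr qxy E (E x)

/-- The virtual value function
`𝒱(E) = H(Y|E(X)) - α·H(Z|(E(X),π_E(X))) - β·H(V|(E(X),π_E(X)))`. -/
noncomputable def virtVal {X Y Z V F : Type*}
    [Fintype X] [Fintype Y] [Fintype Z] [Fintype V]
    (α β : ℝ) (q : X × Y × Z × V → ℝ) (E : X → F) : ℝ :=
  condEnt (qXY q) E
    - α * condEnt (qXZ q) (fun x => (E x, postFeat (qXY q) E x))
    - β * condEnt (qXV q) (fun x => (E x, postFeat (qXY q) E x))

set_option linter.unusedSectionVars false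
set_option maxHeartbeats 800000

section Aux

variable {X W A B : Type*} [Fintype X] [Fintype W]

lemma jointPr_nonneg (q : X × W → ℝ) (hq : ∀ p, 0 ≤ q p) (f : X → A) (a : A) (w : W) :
    0 ≤ jointPr q f a w :=
  Finset.sum_nonneg fun _ _ => hq _

lemma margX_nonneg (q : X × W → ℝ) (hq : ∀ p, 0 ≤ q p) (x : X) : 0 ≤ margX q x :=
  Finset.sum_nonneg fun _ _ => hq _

lemma featPr_nonneg (q : X × W → ℝ) (hq : ∀ p, 0 ≤ q p) (f : X → A) (a : A) :
    0 ≤ featPr q f a :=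
  Finset.sum_nonneg fun _ _ => margX_nonneg q hq _

lemma featPr_eq_sum (q : X × W → ℝ) (f : X → A) (a : A) :
    featPr q f a = ∑ w, jointPr q f a w := by
  unfold featPr jointPr margX
  exact Finset.sum_comm

lemma jointPr_eq_zero (q : X × W → ℝ) (hq : ∀ p, 0 ≤ q p) (f : X → A) (a : A)
    (h : featPr q f a = 0) (w : W) : jointPr q f a w = 0 := by
  rw [featPr_eq_sum] at h
  exact (Finset.sum_eq_zero_iff_of_nonneg
    (fun w _ => jointPr_nonneg q hq f a w)).1 h w (Finset.mem_univ w)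

open Classical in
lemma featPr_self_pos (q : X × W → ℝ) (hq : ∀ p, 0 ≤ q p) (f : X → A) (x : X)
    (hx : 0 < margX q x) : 0 < featPr q f (f x) := by
  have hmem : x ∈ Finset.univ.filter (fun x' => f x' = f x) := by simp
  exact lt_of_lt_of_le hx
    (Finset.single_le_sum (fun i _ => margX_nonneg q hq i) hmem)

open Classical in
lemma jointPr_id (q : X × W → ℝ) (a : X) (w : W) : jointPr q id a w = q (a, w) := by
  unfold jointPr
  rw [Finset.sum_filter]
  simp

open Classical in
lemma featPr_id (q : X × W → ℝ) (a : X) : featPr q id a = margX q a := by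
  unfold featPr
  rw [Finset.sum_filter]
  simp

end Aux

section LogSum
variable {A : Type*}

private lemma term_rw (n c : ℝ) (h0 : c = 0 → n = 0) :
    -n * Real.log (n / c) = -(c * ((n / c) * Real.log (n / c))) := by
  rcases eq_or_ne c 0 with h | h
  · simp [h, h0 h]
  · have : c * (n / c * Real.log (n / c)) = n * Real.log (n / c) := by
      rw [← mul_assoc, mul_comm c (n / c), div_mul_cancel₀ n h]
    rw [this, neg_mul]

lemma logsum_le (s : Finset A) (n c : A → ℝ)
    (hn : ∀ a ∈ s, 0 ≤ n a) (hc : ∀ a ∈ s, 0 ≤ c a)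
    (h0 : ∀ a ∈ s, c a = 0 → n a = 0) :
    ∑ a ∈ s, -(n a) * Real.log (n a / c a)
      ≤ -(∑ a ∈ s, n a) * Real.log ((∑ a ∈ s, n a) / (∑ a ∈ s, c a)) := by
  set C := ∑ a ∈ s, c a with hC
  set N := ∑ a ∈ s, n a with hN
  rcases eq_or_lt_of_le (Finset.sum_nonneg hc : (0:ℝ) ≤ C) with hC0 | hCpos
  · -- C = 0 : everything vanishes
    have hcz : ∀ a ∈ s, c a = 0 :=
      fun a ha => (Finset.sum_eq_zero_iff_of_nonneg hc).1 hC0.symm a ha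
    have hnz : ∀ a ∈ s, n a = 0 := fun a ha => h0 a ha (hcz a ha)
    have hNz : N = 0 := Finset.sum_eq_zero hnz
    rw [Finset.sum_eq_zero (fun a ha => by rw [hnz a ha]; simp)]
    simp [hNz]
  · -- C > 0 : Jensen
    have hLHS : ∑ a ∈ s, -(n a) * Real.log (n a / c a)
        = -(∑ a ∈ s, c a * ((n a / c a) * Real.log (n a / c a))) := by
      rw [← Finset.sum_neg_distrib]
      exact Finset.sum_congr rfl fun a ha => term_rw (n a) (c a) (h0 a ha)
    have hCne : C ≠ 0 := ne_of_gt hCpos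
    have hw1 : ∑ a ∈ s, c a / C = 1 := by
      rw [← Finset.sum_div, ← hC, div_self hCne]
    have hpt : ∀ a ∈ s, (c a / C) * (n a / c a) = n a / C := by
      intro a ha
      rcases eq_or_ne (c a) 0 with h | h
      · simp [h, h0 a ha]
      · field_simp
    have jensen := Real.convexOn_mul_log.map_sum_le (t := s)
      (w := fun a => c a / C) (p := fun a => n a / c a)
      (fun a ha => div_nonneg (hc a ha) hCpos.le) hw1
      (fun a ha => Set.mem_Ici.2 (div_nonneg (hn a ha) (hc a ha)))
    simp only [smul_eq_mul] at jensen
    rw [Finset.sum_congr rfl hpt, ← Finset.sum_div, ← hN] at jensen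
    -- jensen : (N/C) * log (N/C) ≤ ∑ a in s, (c a / C) * ((n a / c a) * log (n a / c a))
    have hRHS : ∑ a ∈ s, (c a / C) * ((n a / c a) * Real.log (n a / c a))
        = (∑ a ∈ s, c a * ((n a / c a) * Real.log (n a / c a))) / C := by
      rw [Finset.sum_div]
      exact Finset.sum_congr rfl fun a _ => by ring
    rw [hRHS, le_div_iff₀ hCpos] at jensen
    have : N * Real.log (N / C) ≤ ∑ a ∈ s, c a * ((n a / c a) * Real.log (n a / c a)) := by
      calc N * Real.log (N / C) = (N / C * Real.log (N / C)) * C := by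
            field_simp
        _ ≤ _ := jensen
    rw [hLHS, neg_mul]
    linarith

lemma logsum_eq (s : Finset A) (n c : A → ℝ)
    (hn : ∀ a ∈ s, 0 ≤ n a) (hc : ∀ a ∈ s, 0 ≤ c a)
    (h0 : ∀ a ∈ s, c a = 0 → n a = 0)
    (heq : ∑ a ∈ s, -(n a) * Real.log (n a / c a)
      = -(∑ a ∈ s, n a) * Real.log ((∑ a ∈ s, n a) / (∑ a ∈ s, c a))) :
    ∀ a ∈ s, n a * (∑ a ∈ s, c a) = (∑ a ∈ s, n a) * c a := by
  classical
  by_contra hcon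
  push_neg at hcon
  obtain ⟨a0, ha0, ha0ne⟩ := hcon
  set C := ∑ a ∈ s, c a with hC
  set N := ∑ a ∈ s, n a with hN
  have hCpos : 0 < C := by
    rcases eq_or_lt_of_le (Finset.sum_nonneg hc : (0:ℝ) ≤ C) with hC0 | h
    · exfalso
      have hcz : ∀ a ∈ s, c a = 0 :=
        fun a ha => (Finset.sum_eq_zero_iff_of_nonneg hc).1 hC0.symm a ha
      exact ha0ne (by rw [h0 a0 ha0 (hcz a0 ha0), hcz a0 ha0]; ring)
    · exact h
  have hCne : C ≠ 0 := ne_of_gt hCpos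
  set s' := s.filter (fun a => 0 < c a) with hs'
  have hsub : s' ⊆ s := Finset.filter_subset _ _
  have hcsum : ∑ a ∈ s', c a = C := by
    rw [hC]
    exact Finset.sum_filter_of_ne (fun a ha hne => lt_of_le_of_ne (hc a ha) (Ne.symm hne))
  have hnsum : ∑ a ∈ s', n a = N := by
    rw [hN]
    refine Finset.sum_filter_of_ne (fun a ha hne => ?_)
    rcases eq_or_lt_of_le (hc a ha) with h | h
    · exact absurd (h0 a ha h.symm) hne
    · exact h
  set r : A → ℝ := fun a => n a / c a with hr
  -- there is a1 in s' with r a1 ≠ N / C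
  have hex1 : ∃ a1 ∈ s', r a1 ≠ N / C := by
    by_contra hall
    push_neg at hall
    apply ha0ne
    rcases eq_or_lt_of_le (hc a0 ha0) with h | h
    · rw [h0 a0 ha0 h.symm, ← h]; ring
    · have := hall a0 (Finset.mem_filter.2 ⟨ha0, h⟩)
      rw [hr] at this
      field_simp at this
      linarith [this]
  obtain ⟨a1, ha1, ha1ne⟩ := hex1
  have hNC : N / C = ∑ a ∈ s', (c a / C) * r a := by
    have : ∀ a ∈ s', (c a / C) * r a = n a / C := by
      intro a ha
      have hca : 0 < c a := (Finset.mem_filter.1 ha).2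
      rw [hr]
      field_simp
    rw [Finset.sum_congr rfl this, ← Finset.sum_div, hnsum]
  have hex2 : ∃ a2 ∈ s', r a2 ≠ r a1 := by
    by_contra hall
    push_neg at hall
    apply ha1ne
    have : N / C = ∑ a ∈ s', (c a / C) * r a1 :=
      hNC.trans (Finset.sum_congr rfl fun a ha => by rw [hall a ha])
    rw [← Finset.sum_mul, ← Finset.sum_div, hcsum, div_self hCne, one_mul] at this
    exact this.symm
  obtain ⟨a2, ha2, ha2ne⟩ := hex2
  -- strict Jensen on s'
  have hw1 : ∑ a ∈ s', c a / C = 1 := by rw [← Finset.sum_div, hcsum, div_self hCne]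
  have strict := Real.strictConvexOn_mul_log.map_sum_lt (t := s')
    (w := fun a => c a / C) (p := r)
    (fun a ha => div_pos (Finset.mem_filter.1 ha).2 hCpos) hw1
    (fun a ha => Set.mem_Ici.2 (div_nonneg (hn a (hsub ha)) (hc a (hsub ha))))
    ⟨a2, ha2, a1, ha1, ha2ne⟩
  simp only [smul_eq_mul] at strict
  rw [← hNC] at strict
  -- strict : (N/C) * log (N/C) < ∑ a in s', (c a / C) * (r a * log (r a))
  have hsum' : ∑ a ∈ s', (c a / C) * (r a * Real.log (r a))
      = (∑ a ∈ s, c a * (r a * Real.log (r a))) / C := by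
    rw [Finset.sum_div]
    have : ∑ a ∈ s', c a * (r a * Real.log (r a)) / C
        = ∑ a ∈ s, c a * (r a * Real.log (r a)) / C := by
      refine Finset.sum_filter_of_ne (fun a ha hne => ?_)
      rcases eq_or_lt_of_le (hc a ha) with h | h
      · exact absurd (by rw [← h]; simp) hne
      · exact h
    rw [← this]
    exact Finset.sum_congr rfl fun a _ => by ring
  rw [hsum', lt_div_iff₀ hCpos] at strict
  have hstrict : N * Real.log (N / C) < ∑ a ∈ s, c a * (r a * Real.log (r a)) := by
    calc N * Real.log (N / C) = (N / C * Real.log (N / C)) * C := by field_simp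
      _ < _ := strict
  have hLHS : ∑ a ∈ s, -(n a) * Real.log (n a / c a)
      = -(∑ a ∈ s, c a * (r a * Real.log (r a))) := by
    rw [← Finset.sum_neg_distrib]
    exact Finset.sum_congr rfl fun a ha => term_rw (n a) (c a) (h0 a ha)
  rw [hLHS, neg_mul] at heq
  have := heq
  linarith
end LogSum

section DPI
variable {X W A B : Type*} [Fintype X] [Fintype W]

open Classical in
lemma jointPr_comp (q : X × W → ℝ) (f : X → A) (g : A → B) (b : B) (w : W) :
    jointPr q (g ∘ f) b w
      = ∑ a ∈ (Finset.univ.image f).filter (fun a => g a = b), jointPr q f a w := by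
  unfold jointPr
  rw [← Finset.sum_fiberwise_of_maps_to (g := f)
      (t := (Finset.univ.image f).filter (fun a => g a = b))
      (fun x hx => by
        simp only [Finset.mem_filter, Finset.mem_univ, true_and, Function.comp] at hx ⊢
        exact ⟨Finset.mem_image_of_mem f (Finset.mem_univ x), hx⟩)
      (fun x => q (x, w))]
  refine Finset.sum_congr rfl fun a ha => Finset.sum_congr ?_ fun _ _ => rfl
  have hga : g a = b := (Finset.mem_filter.1 ha).2
  ext x
  simp only [Finset.mem_filter, Finset.mem_univ, true_and, Function.comp]
  constructor
  · rintro ⟨-, h⟩; exact h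
  · rintro h; exact ⟨by rw [h, hga], h⟩

open Classical in
lemma featPr_comp (q : X × W → ℝ) (f : X → A) (g : A → B) (b : B) :
    featPr q (g ∘ f) b
      = ∑ a ∈ (Finset.univ.image f).filter (fun a => g a = b), featPr q f a := by
  unfold featPr
  rw [← Finset.sum_fiberwise_of_maps_to (g := f)
      (t := (Finset.univ.image f).filter (fun a => g a = b))
      (fun x hx => by
        simp only [Finset.mem_filter, Finset.mem_univ, true_and, Function.comp] at hx ⊢
        exact ⟨Finset.mem_image_of_mem f (Finset.mem_univ x), hx⟩)
      (fun x => margX q x)]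
  refine Finset.sum_congr rfl fun a ha => Finset.sum_congr ?_ fun _ _ => rfl
  have hga : g a = b := (Finset.mem_filter.1 ha).2
  ext x
  simp only [Finset.mem_filter, Finset.mem_univ, true_and, Function.comp]
  constructor
  · rintro ⟨-, h⟩; exact h
  · rintro h; exact ⟨by rw [h, hga], h⟩

open Classical in
lemma dpi_eq (q : X × W → ℝ) (hq : ∀ p, 0 ≤ q p) (f : X → A) (F : X → B) (g : A → B)
    (hg : ∀ x, g (f x) = F x)
    (h : condEnt q f = condEnt q F) (x : X) (w : W) :
    jointPr q f (f x) w * featPr q F (F x)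
      = jointPr q F (F x) w * featPr q f (f x) := by
  have hF : F = g ∘ f := funext fun y => (hg y).symm
  subst hF
  set T := Finset.univ.image (g ∘ f) with hT
  set fib : B → Finset A := fun b => (Finset.univ.image f).filter (fun a => g a = b) with hfib
  have hn : ∀ (a : A) (w' : W), 0 ≤ jointPr q f a w' := jointPr_nonneg q hq f
  have hcnn : ∀ a : A, 0 ≤ featPr q f a := featPr_nonneg q hq f
  have hc0 : ∀ (a : A) (w' : W), featPr q f a = 0 → jointPr q f a w' = 0 :=
    fun a w' hfa => jointPr_eq_zero q hq f a hfa w'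
  -- termwise inequality
  have hle : ∀ (b : B) (w' : W),
      (∑ a ∈ fib b, -(jointPr q f a w') * Real.log (jointPr q f a w' / featPr q f a))
        ≤ -(jointPr q (g ∘ f) b w')
            * Real.log (jointPr q (g ∘ f) b w' / featPr q (g ∘ f) b) := by
    intro b w'
    rw [jointPr_comp q f g b w', featPr_comp q f g b]
    exact logsum_le _ _ _ (fun a _ => hn a w') (fun a _ => hcnn a) (fun a _ => hc0 a w')
  -- regrouping of condEnt q f
  have hmaps : ∀ a ∈ Finset.univ.image f, g a ∈ T := by
    intro a ha
    rcases Finset.mem_image.1 ha with ⟨y, -, rfl⟩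
    exact Finset.mem_image_of_mem (g ∘ f) (Finset.mem_univ y)
  have hre : condEnt q f
      = ∑ b ∈ T, ∑ w', ∑ a ∈ fib b,
          -(jointPr q f a w') * Real.log (jointPr q f a w' / featPr q f a) := by
    rw [condEnt, ← Finset.sum_fiberwise_of_maps_to hmaps]
    exact Finset.sum_congr rfl fun b _ => Finset.sum_comm
  have hce2 : condEnt q (g ∘ f)
      = ∑ b ∈ T, ∑ w', -(jointPr q (g ∘ f) b w')
          * Real.log (jointPr q (g ∘ f) b w' / featPr q (g ∘ f) b) := rfl
  -- from equality of sums, equality per (b, w')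
  have hsum_eq : ∑ b ∈ T, (∑ w', ∑ a ∈ fib b,
        -(jointPr q f a w') * Real.log (jointPr q f a w' / featPr q f a))
      = ∑ b ∈ T, ∑ w', -(jointPr q (g ∘ f) b w')
          * Real.log (jointPr q (g ∘ f) b w' / featPr q (g ∘ f) b) := by
    rw [← hre, ← hce2]; exact h
  have hbw : ∀ b ∈ T, ∀ w',
      (∑ a ∈ fib b, -(jointPr q f a w') * Real.log (jointPr q f a w' / featPr q f a))
        = -(jointPr q (g ∘ f) b w')
            * Real.log (jointPr q (g ∘ f) b w' / featPr q (g ∘ f) b) := by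
    intro b hb w'
    have hB := (Finset.sum_eq_sum_iff_of_le
      (fun b _ => Finset.sum_le_sum (fun w' _ => hle b w'))).1 hsum_eq b hb
    exact (Finset.sum_eq_sum_iff_of_le (fun w' _ => hle b w')).1 hB w' (Finset.mem_univ w')
  -- apply the equality case of the log-sum inequality at b = g (f x)
  have hbx : g (f x) ∈ T := Finset.mem_image_of_mem (g ∘ f) (Finset.mem_univ x)
  have hax : f x ∈ fib (g (f x)) :=
    Finset.mem_filter.2 ⟨Finset.mem_image_of_mem f (Finset.mem_univ x), rfl⟩
  have heq := hbw (g (f x)) hbx w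
  rw [jointPr_comp q f g (g (f x)) w, featPr_comp q f g (g (f x))] at heq
  have key := logsum_eq _ _ _ (fun a _ => hn a w) (fun a _ => hcnn a)
    (fun a _ => hc0 a w) heq (f x) hax
  rw [← jointPr_comp q f g (g (f x)) w, ← featPr_comp q f g (g (f x))] at key
  exact key

end DPI
/-- Corollary 2, discriminator part: if `H(Y|E(X)) = H(Y|X)` and
`H(Z|(E(X),π_E(X))) = H(Z|π_E(X))`, then with `Φ(x) = (E(x), π_E(x))`, for all `x, z`,
`Pr[Φ=Φ(x), Z=z]/Pr[Φ=Φ(x)] = Pr[π=π(x), Z=z]/Pr[π=π(x)]`, where `π` is the true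
posterior map. -/
theorem statement12 {X Y Z V F : Type*}
    [Fintype X] [Nonempty X] [Fintype Y] [Nonempty Y]
    [Fintype Z] [Nonempty Z] [Fintype V] [Nonempty V]
    (q : X × Y × Z × V → ℝ) (hq0 : ∀ p, 0 ≤ q p) (hq1 : ∑ p, q p = 1)
    (hqX : ∀ x, 0 < margX (qXY q) x) (E : X → F)
    (h1 : condEnt (qXY q) E = condEnt (qXY q) id)
    (h2 : condEnt (qXZ q) (fun x => (E x, postFeat (qXY q) E x))
          = condEnt (qXZ q) (postFeat (qXY q) E)) :
    ∀ (x : X) (z : Z),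
      jointPr (qXZ q) (fun x => (E x, postFeat (qXY q) E x)) (E x, postFeat (qXY q) E x) z
        / featPr (qXZ q) (fun x => (E x, postFeat (qXY q) E x)) (E x, postFeat (qXY q) E x)
      = jointPr (qXZ q) (postMap (qXY q)) (postMap (qXY q) x) z
        / featPr (qXZ q) (postMap (qXY q)) (postMap (qXY q) x) := by
  intro x z
  have hq2 : ∀ p, 0 ≤ qXY q p :=
    fun p => Finset.sum_nonneg fun _ _ => Finset.sum_nonneg fun _ _ => hq0 _
  have hq3 : ∀ p, 0 ≤ qXZ q p :=
    fun p => Finset.sum_nonneg fun _ _ => Finset.sum_nonneg fun _ _ => hq0 _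
  have hmarg : ∀ x' : X, margX (qXZ q) x' = margX (qXY q) x' := by
    intro x'
    unfold margX qXY qXZ
    exact Finset.sum_comm
  -- Step 1 : `postFeat (qXY q) E = postMap (qXY q)` from `h1`.
  have hpf : postFeat (qXY q) E = postMap (qXY q) := by
    funext x' y
    have h := dpi_eq (qXY q) hq2 id E E (fun _ => rfl) h1.symm x' y
    simp only [id_eq] at h
    rw [jointPr_id, featPr_id] at h
    have hm : 0 < margX (qXY q) x' := hqX x'
    have hf : 0 < featPr (qXY q) E (E x') := featPr_self_pos (qXY q) hq2 E x' hm
    show jointPr (qXY q) E (E x') y / featPr (qXY q) E (E x') = qXY q (x', y) / margX (qXY q) x'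
    rw [div_eq_div_iff (ne_of_gt hf) (ne_of_gt hm)]
    linarith [h]
  rw [hpf] at h2 ⊢
  -- Step 2 : equality of posteriors from `h2`.
  have key2 := dpi_eq (qXZ q) hq3 (fun x' => (E x', postMap (qXY q) x'))
    (postMap (qXY q)) Prod.snd (fun _ => rfl) h2 x z
  have hmz : 0 < margX (qXZ q) x := by rw [hmarg]; exact hqX x
  have hfΦ : featPr (qXZ q) (fun x' => (E x', postMap (qXY q) x'))
      (E x, postMap (qXY q) x) ≠ 0 :=
    ne_of_gt (featPr_self_pos (qXZ q) hq3 (fun x' => (E x', postMap (qXY q) x')) x hmz)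
  have hfpm : featPr (qXZ q) (postMap (qXY q)) (postMap (qXY q) x) ≠ 0 :=
    ne_of_gt (featPr_self_pos (qXZ q) hq3 (postMap (qXY q)) x hmz)
  rw [div_eq_div_iff hfΦ hfpm]
  exact key2
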